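/- Every nonzero element of B admits a polar factorization: for every nonzero g ∈ B there exist a nonzero r ∈ A and h ∈ Δ(B) such that g = r·h. -/

import Mathlib

/-- `f ∈ Δ(B)`: `f` is nonzero and has no real divisor with respect to the
real form `A ⊆ B`: whenever `f ∈ rB` with `r ∈ A` nonzero, `r` is a unit of `A`. -/
def Delta {B : Type} [CommRing B] (A : Subring B) (f : B) : Prop :=
  f ≠ 0 ∧ ∀ r : A, (r : B) ≠ 0 → (r : B) ∣ f → IsUnit r

/-- Let `A` be a Noetherian integral `ℝ`-domain in which `ℝ` is
algebraically closed and `B = ℂ ⊗ℝ A` an integral domain (so `B = A ⊕ iA`).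
Every nonzero `g ∈ B` admits a polar factorization `g = r·h` with `0 ≠ r ∈ A` and
`h ∈ Δ(B)`. -/
theorem exists_polar_factorization (B : Type) [CommRing B] [IsDomain B] [Algebra ℂ B]
    [Algebra ℝ B] [IsScalarTower ℝ ℂ B] (A : Subring B)
    (hRmem : ∀ r : ℝ, algebraMap ℝ B r ∈ A)
    (hNoeth : IsNoetherianRing ↥A)
    (halgclosed : ∀ a ∈ A, IsAlgebraic ℝ a → ∃ r : ℝ, a = algebraMap ℝ B r)
    (hdecomp : ∀ b : B, ∃! p : ↥A × ↥A,
      b = (p.1 : B) + algebraMap ℂ B Complex.I * (p.2 : B))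
    (g : B) (hg : g ≠ 0) :
    ∃ (r : ↥A) (h : B), (r : B) ≠ 0 ∧ Delta A h ∧ g = (r : B) * h := by
  classical
  choose P hP1 hP2 using hdecomp
  -- P b gives the components of b, unique
  have hzero : ∀ b : B, b = 0 → P b = 0 := by
    intro b hb
    have := hP2 b (0, 0) (by simp [hb])
    exact this.symm
  have hne : ∀ b : B, P b ≠ 0 → b ≠ 0 := fun b h hb => h (hzero b hb)
  have hne' : ∀ b : B, b ≠ 0 → P b ≠ 0 := by
    intro b hb h0
    apply hb
    have := hP1 b
    rw [h0] at this
    simpa using this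
  have hmul : ∀ (s : ↥A) (b : B), P ((s : B) * b) = (s * (P b).1, s * (P b).2) := by
    intro s b
    refine (hP2 ((s : B) * b) (s * (P b).1, s * (P b).2) ?_).symm
    have hb := hP1 b
    show (s : B) * b = ((s * (P b).1 : ↥A) : B) + algebraMap ℂ B Complex.I * ((s * (P b).2 : ↥A) : B)
    push_cast
    conv_lhs => rw [hb]
    ring
  -- the ideal of components
  set J : B → Ideal ↥A := fun b => Ideal.span {(P b).1, (P b).2} with hJ
  set S : Set (Ideal ↥A) := {I | ∃ (r : ↥A) (h : B), (r : B) ≠ 0 ∧ g = (r : B) * h ∧ I = J h}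
    with hS
  have hSne : S.Nonempty := ⟨J g, 1, g, by simp, by simp, rfl⟩
  haveI := hNoeth
  have wf : WellFounded ((· > ·) : Ideal ↥A → Ideal ↥A → Prop) :=
    isNoetherian_iff.mp inferInstance
  obtain ⟨I, hIS, hImax⟩ := wf.has_min S hSne
  obtain ⟨r, h, hr, hgrh, hIJ⟩ := hIS
  refine ⟨r, h, hr, ⟨?_, ?_⟩, hgrh⟩
  · intro h0
    exact hg (by rw [hgrh, h0, mul_zero])
  · rintro s hs ⟨h', rfl⟩
    have hh' : h' ≠ 0 := by
      rintro rfl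
      rw [mul_zero] at hgrh
      exact hg (by rw [hgrh, mul_zero])
    have hcomp : P ((s : B) * h') = (s * (P h').1, s * (P h').2) := hmul s h'
    -- J (s*h') ≤ J h'
    have hle : J ((s : B) * h') ≤ J h' := by
      rw [hJ]
      simp only [hcomp]
      apply Ideal.span_le.mpr
      rintro x hx
      rcases hx with rfl | hx
      · exact Ideal.mul_mem_left _ _ (Ideal.subset_span (Set.mem_insert _ _))
      · rcases hx with rfl
        exact Ideal.mul_mem_left _ _ (Ideal.subset_span (Set.mem_insert_of_mem _ rfl))
    have hJ'S : J h' ∈ S := by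
      refine ⟨r * s, h', ?_, ?_, rfl⟩
      · push_cast
        exact mul_ne_zero hr hs
      · rw [hgrh]; push_cast; ring
    have heq : I = J h' := by
      by_contra hne2
      have hlt : I < J h' := lt_of_le_of_ne (hIJ ▸ hle) hne2
      exact hImax (J h') hJ'S hlt
    -- Nakayama: J h' ≤ (span {s}) • J h'
    have hsmul : J h' ≤ Ideal.span {s} • J h' := by
      conv_lhs => rw [← heq, hIJ]
      simp only [hJ, hcomp]
      apply Ideal.span_le.mpr
      rintro x hx
      rcases hx with rfl | hx
      · exact Submodule.smul_mem_smul (Ideal.subset_span rfl)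
          (Ideal.subset_span (Set.mem_insert _ _))
      · rcases hx with rfl
        exact Submodule.smul_mem_smul (Ideal.subset_span rfl)
          (Ideal.subset_span (Set.mem_insert_of_mem _ rfl))
    have hfg : (J h').FG := IsNoetherian.noetherian _
    obtain ⟨t, ht1, ht2⟩ :=
      Submodule.exists_sub_one_mem_and_smul_eq_zero_of_fg_of_le_smul
        (Ideal.span {s}) (J h') hfg hsmul
    -- there is a nonzero element of J h'
    have hPne : P h' ≠ 0 := hne' h' hh'
    obtain ⟨n, hnJ, hn0⟩ : ∃ n : ↥A, n ∈ J h' ∧ n ≠ 0 := by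
      by_cases h1 : (P h').1 = 0
      · refine ⟨(P h').2, Ideal.subset_span (Set.mem_insert_of_mem _ rfl), ?_⟩
        intro h2
        exact hPne (Prod.ext h1 h2)
      · exact ⟨(P h').1, Ideal.subset_span (Set.mem_insert _ _), h1⟩
    have ht0 : t = 0 := by
      have := ht2 n hnJ
      rw [smul_eq_mul] at this
      rcases mul_eq_zero.mp this with h | h
      · exact h
      · exact absurd h hn0
    rw [ht0, zero_sub] at ht1
    have h1mem : (1 : ↥A) ∈ Ideal.span {s} := by
      simpa using (Ideal.span {s}).neg_mem ht1
    exact Ideal.span_singleton_eq_top.mp (Ideal.eq_top_iff_one _ |>.mpr h1mem)
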